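/- Consider two jointly Gaussian scalar estimates v̂^1 = α(V + W^1) and v̂^2 = β(V + W^2) with V ~ N(0,σ²), W^i ~ N(0,q_i) mutually independent, α = σ²/(σ²+q_1), β = σ²/(σ²+q_2). Then E[v̂^2 | v̂^1] = β v̂^1, and iterating, E[ E[v̂^1 | X^2] | X^1 ] = α β v̂^1; hence the infinite hierarchy of estimates-of-estimates is generated by v̂^1 via multiplication by fixed public scalars. -/

import Mathlib

open MeasureTheory ProbabilityTheory Matrix
open Real

lemma integrable_mul_pdf0 (v : NNReal) (hv : v ≠ 0) :
    Integrable (fun x => x * gaussianPDFReal 0 v x) := by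
  have hv' : (0:ℝ) < v := lt_of_le_of_ne v.coe_nonneg (by exact_mod_cast hv.symm)
  have h : (fun x : ℝ => x * gaussianPDFReal 0 v x)
      = fun x => (√(2 * π * v))⁻¹ * (x * rexp (-((2:ℝ)*(v:ℝ))⁻¹ * x ^ 2)) := by
    ext x
    simp only [gaussianPDFReal, sub_zero]
    rw [show -x^2 / (2*(v:ℝ)) = -((2:ℝ)*(v:ℝ))⁻¹ * x^2 by field_simp]
    ring
  rw [h]
  exact (integrable_mul_exp_neg_mul_sq (by positivity)).const_mul _

lemma integrable_mul_pdf (m : ℝ) (v : NNReal) (hv : v ≠ 0) :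
    Integrable (fun x => x * gaussianPDFReal m v x) := by
  have h : (fun x => x * gaussianPDFReal m v x)
      = fun x => ((x - m) * gaussianPDFReal 0 v (x - m) + m * gaussianPDFReal 0 v (x - m)) := by
    ext x
    rw [gaussianPDFReal_sub x m, zero_add]
    ring
  rw [h]
  exact ((integrable_mul_pdf0 v hv).comp_sub_right m).add
    (((integrable_gaussianPDFReal 0 v).comp_sub_right m).const_mul m)

lemma integral_mul_pdf0 (v : NNReal) (hv : v ≠ 0) :
    ∫ x, x * gaussianPDFReal 0 v x = 0 := by
  have hodd : ∀ x : ℝ, (-x) * gaussianPDFReal 0 v (-x) = -(x * gaussianPDFReal 0 v x) := by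
    intro x
    simp only [gaussianPDFReal, sub_zero, neg_sq]
    ring
  have h := MeasureTheory.integral_neg_eq_self (fun x => x * gaussianPDFReal 0 v x) volume
  simp only [hodd, integral_neg] at h
  linarith

lemma integral_mul_pdf (m : ℝ) (v : NNReal) (hv : v ≠ 0) :
    ∫ x, x * gaussianPDFReal m v x = m := by
  have h : ∀ x : ℝ, x * gaussianPDFReal m v x
      = ((x - m) * gaussianPDFReal 0 v (x - m) + m * gaussianPDFReal 0 v (x - m)) := by
    intro x
    rw [gaussianPDFReal_sub x m, zero_add]
    ring
  simp only [h]
  rw [integral_add ((integrable_mul_pdf0 v hv).comp_sub_right m)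
    (((integrable_gaussianPDFReal 0 v).comp_sub_right m).const_mul m)]
  have h1 : ∫ x:ℝ, (x - m) * gaussianPDFReal 0 v (x - m)
      = ∫ x:ℝ, x * gaussianPDFReal 0 v x :=
    integral_sub_right_eq_self (fun x => x * gaussianPDFReal 0 v x) m
  have h2 : ∫ x:ℝ, m * gaussianPDFReal 0 v (x - m) = m * ∫ x:ℝ, gaussianPDFReal 0 v (x-m) := by
    rw [integral_const_mul]
  rw [h1, h2, integral_mul_pdf0 v hv,
    integral_sub_right_eq_self (gaussianPDFReal 0 v) m, integral_gaussianPDFReal_eq_one 0 hv]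
  ring

lemma gaussianReal_withDensity (m : ℝ) {v : NNReal} (hv : v ≠ 0) :
    gaussianReal m v
      = volume.withDensity (fun x => ((gaussianPDFReal m v x).toNNReal : ENNReal)) := by
  rw [gaussianReal_of_var_ne_zero m hv]
  rfl

lemma integral_gauss (m : ℝ) {v : NNReal} (hv : v ≠ 0) (h : ℝ → ℝ) :
    ∫ x, h x ∂(gaussianReal m v) = ∫ x, h x * gaussianPDFReal m v x := by
  rw [gaussianReal_withDensity m hv,
    integral_withDensity_eq_integral_smul ((measurable_gaussianPDFReal m v).real_toNNReal) h]
  congr 1 with x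
  rw [NNReal.smul_def, Real.coe_toNNReal _ (gaussianPDFReal_nonneg m v x), smul_eq_mul, mul_comm]

lemma integrable_gauss_iff (m : ℝ) {v : NNReal} (hv : v ≠ 0) (h : ℝ → ℝ) :
    Integrable h (gaussianReal m v) ↔ Integrable (fun x => h x * gaussianPDFReal m v x) := by
  rw [gaussianReal_withDensity m hv,
    integrable_withDensity_iff_integrable_smul ((measurable_gaussianPDFReal m v).real_toNNReal)]
  constructor <;> intro hh <;> refine hh.congr (Filter.Eventually.of_forall fun x => ?_) <;>
    simp only [NNReal.smul_def, smul_eq_mul,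
      Real.coe_toNNReal _ (gaussianPDFReal_nonneg m v x), mul_comm]

lemma integrable_id_gauss (m : ℝ) (v : NNReal) :
    Integrable (fun x => x) (gaussianReal m v) := by
  by_cases hv : v = 0
  · subst hv; rw [gaussianReal_zero_var]
    exact ⟨stronglyMeasurable_id.aestronglyMeasurable, by
      simp [HasFiniteIntegral, lintegral_dirac]⟩
  · rw [integrable_gauss_iff m hv]
    exact integrable_mul_pdf m v hv

lemma integral_id_gauss (m : ℝ) (v : NNReal) :
    ∫ x, x ∂(gaussianReal m v) = m := by
  by_cases hv : v = 0
  · subst hv; rw [gaussianReal_zero_var]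
    simp
  · rw [integral_gauss m hv, integral_mul_pdf m v hv]

lemma pdf_factor {s q : NNReal} (hs : s ≠ 0) (hq : q ≠ 0) (x w : ℝ) :
    gaussianPDFReal 0 s (x - w) * gaussianPDFReal 0 q w
      = gaussianPDFReal 0 (s + q) x
        * gaussianPDFReal ((q : ℝ) / ((s : ℝ) + q) * x) (s * q / (s + q)) w := by
  have hs' : (0:ℝ) < s := lt_of_le_of_ne s.coe_nonneg (by exact_mod_cast hs.symm)
  have hq' : (0:ℝ) < q := lt_of_le_of_ne q.coe_nonneg (by exact_mod_cast hq.symm)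
  have hsq : (0:ℝ) < (s:ℝ) + q := by positivity
  have hτ : ((s * q / (s + q) : NNReal) : ℝ) = (s:ℝ) * q / ((s:ℝ) + q) := by push_cast; ring
  simp only [gaussianPDFReal, sub_zero, hτ, NNReal.coe_add]
  rw [mul_mul_mul_comm, mul_mul_mul_comm ((√(2*π*((s:ℝ)+(q:ℝ))))⁻¹)]
  congr 1
  · rw [← mul_inv, ← mul_inv, ← Real.sqrt_mul (by positivity), ← Real.sqrt_mul (by positivity)]
    congr 2
    field_simp
  · rw [← Real.exp_add, ← Real.exp_add]
    congr 1
    field_simp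
    ring

/-- the shear `(v, w) ↦ (v + w, w)` as a measurable equiv. -/
def shearEquiv : (ℝ × ℝ) ≃ᵐ (ℝ × ℝ) where
  toFun p := (p.1 + p.2, p.2)
  invFun p := (p.1 - p.2, p.2)
  left_inv p := by simp
  right_inv p := by simp
  measurable_toFun := (measurable_fst.add measurable_snd).prodMk measurable_snd
  measurable_invFun := (measurable_fst.sub measurable_snd).prodMk measurable_snd

lemma shear_measurePreserving :
    MeasurePreserving (fun p : ℝ × ℝ => (p.1 + p.2, p.2))
      (volume.prod volume) (volume.prod volume) := by
  have h2 := (Measure.measurePreserving_swap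
      (μ := (volume : Measure ℝ)) (ν := (volume : Measure ℝ))).comp
    (measurePreserving_prod_add_swap (volume : Measure ℝ) volume)
  have h3 : (Prod.swap ∘ fun z : ℝ × ℝ => (z.2, z.2 + z.1))
      = fun p : ℝ × ℝ => (p.1 + p.2, p.2) := by
    funext z; simp [Prod.swap, add_comm]
  rwa [h3] at h2

lemma key_vanish {s q : NNReal} (hs : s ≠ 0) (a b : ℝ)
    (hab : a * (s:ℝ) + b * (q:ℝ) = 0) (f : ℝ → ℝ) (hf : Measurable f)
    (hfb : ∀ x, |f x| ≤ 1) :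
    ∫ p : ℝ × ℝ, f (p.1 + p.2) * (a * p.1 + b * p.2)
      ∂((gaussianReal 0 s).prod (gaussianReal 0 q)) = 0 := by
  have hs' : (0:ℝ) < s := lt_of_le_of_ne s.coe_nonneg (by exact_mod_cast hs.symm)
  by_cases hq : q = 0
  · -- degenerate case : `a = 0` and the second coordinate is a.s. zero
    have hq0 : (q:ℝ) = 0 := by exact_mod_cast hq
    have ha : a = 0 := by
      rw [hq0, mul_zero, add_zero] at hab
      exact (mul_eq_zero.mp hab).resolve_right (ne_of_gt hs')
    subst hq
    rw [gaussianReal_zero_var, Measure.prod_dirac]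
    rw [integral_map (by fun_prop)
      (Measurable.aestronglyMeasurable (by fun_prop))]
    simp [ha]
  · have hq' : (0:ℝ) < q :=
      lt_of_le_of_ne q.coe_nonneg (fun h => hq (by exact_mod_cast h.symm))
    have hsq : (0:ℝ) < (s:ℝ) + q := by positivity
    set F : ℝ × ℝ → ℝ := fun p => f (p.1 + p.2) * (a * p.1 + b * p.2) with hF
    have hFm : Measurable F := by fun_prop
    -- integrability of F w.r.t. the product of Gaussians
    have hbound : Integrable (fun p : ℝ × ℝ => |a| * |p.1| * 1 + 1 * (|b| * |p.2|))
        ((gaussianReal 0 s).prod (gaussianReal 0 q)) := by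
      refine Integrable.add ?_ ?_
      · exact (((integrable_id_gauss 0 s).abs.const_mul |a|).mul_prod (integrable_const 1))
      · exact ((integrable_const (μ := gaussianReal 0 s) 1).mul_prod ((integrable_id_gauss 0 q).abs.const_mul |b|))
    have hFint : Integrable F ((gaussianReal 0 s).prod (gaussianReal 0 q)) := by
      refine hbound.mono hFm.aestronglyMeasurable (Filter.Eventually.of_forall fun p => ?_)
      have h1 : ‖F p‖ = |f (p.1+p.2)| * |a * p.1 + b * p.2| := by
        rw [hF]; simp [abs_mul]
      have h2 : |a * p.1 + b * p.2| ≤ |a| * |p.1| + |b| * |p.2| :=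
        le_trans (abs_add_le _ _) (by simp [abs_mul])
      have h3 : |f (p.1+p.2)| * |a * p.1 + b * p.2| ≤ |a * p.1 + b * p.2| := by
        have := hfb (p.1+p.2)
        nlinarith [abs_nonneg (a * p.1 + b * p.2), abs_nonneg (f (p.1+p.2))]
      have h4 : (0:ℝ) ≤ |a| * |p.1| * 1 + 1 * (|b| * |p.2|) := by positivity
      rw [h1, Real.norm_eq_abs, abs_of_nonneg h4]
      nlinarith
    -- convert to an iterated Lebesgue integral
    rw [MeasureTheory.integral_prod _ hFint]
    simp_rw [integral_gauss 0 hq, integral_gauss 0 hs, ← integral_mul_const]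
    have hform : ∀ v w : ℝ, F (v, w) * gaussianPDFReal 0 q w * gaussianPDFReal 0 s v
        = f (v + w) * (a * v + b * w) * (gaussianPDFReal 0 s v * gaussianPDFReal 0 q w) := by
      intro v w; rw [hF]; ring
    simp_rw [hform]
    -- collapse the iterated integral into an integral over the product Lebesgue measure
    set K : ℝ × ℝ → ℝ :=
      fun p => f (p.1 + p.2) * (a * p.1 + b * p.2)
        * (gaussianPDFReal 0 s p.1 * gaussianPDFReal 0 q p.2) with hK
    set H : ℝ × ℝ → ℝ :=
      fun p => f p.1 * (a * (p.1 - p.2) + b * p.2)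
        * (gaussianPDFReal 0 s (p.1 - p.2) * gaussianPDFReal 0 q p.2) with hH
    have hKH : ∀ p : ℝ × ℝ, H (p.1 + p.2, p.2) = K p := by
      intro p; rw [hK, hH]; simp
    have hKint : Integrable K (volume.prod volume) := by
      have hb2 : Integrable (fun p : ℝ × ℝ =>
          (|a| * |p.1| * gaussianPDFReal 0 s p.1) * gaussianPDFReal 0 q p.2
          + gaussianPDFReal 0 s p.1 * (|b| * |p.2| * gaussianPDFReal 0 q p.2))
          (volume.prod volume) := by
        have hA : Integrable (fun x : ℝ => |a| * |x| * gaussianPDFReal 0 s x) := by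
          have h := ((integrable_mul_pdf0 s hs).abs.const_mul |a|)
          refine h.congr (Filter.Eventually.of_forall fun x => ?_)
          simp only [abs_mul, abs_of_nonneg (gaussianPDFReal_nonneg 0 s x)]; ring
        have hB : Integrable (fun x : ℝ => |b| * |x| * gaussianPDFReal 0 q x) := by
          have h := ((integrable_mul_pdf0 q hq).abs.const_mul |b|)
          refine h.congr (Filter.Eventually.of_forall fun x => ?_)
          simp only [abs_mul, abs_of_nonneg (gaussianPDFReal_nonneg 0 q x)]; ring
        exact (hA.mul_prod (integrable_gaussianPDFReal 0 q)).add
          ((integrable_gaussianPDFReal 0 s).mul_prod hB)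
      have hKm : Measurable K := by
        rw [hK]
        exact ((hf.comp (measurable_fst.add measurable_snd)).mul
            ((measurable_const.mul measurable_fst).add
              (measurable_const.mul measurable_snd))).mul
          (((measurable_gaussianPDFReal 0 s).comp measurable_fst).mul
            ((measurable_gaussianPDFReal 0 q).comp measurable_snd))
      refine hb2.mono hKm.aestronglyMeasurable (Filter.Eventually.of_forall fun p => ?_)
      have hnn1 := gaussianPDFReal_nonneg 0 s p.1
      have hnn2 := gaussianPDFReal_nonneg 0 q p.2
      have hnn3 : (0:ℝ) ≤ gaussianPDFReal 0 s p.1 * gaussianPDFReal 0 q p.2 :=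
        mul_nonneg hnn1 hnn2
      have hg4 : (0:ℝ) ≤ |a| * |p.1| * gaussianPDFReal 0 s p.1 * gaussianPDFReal 0 q p.2
          + gaussianPDFReal 0 s p.1 * (|b| * |p.2| * gaussianPDFReal 0 q p.2) := by positivity
      rw [Real.norm_eq_abs, Real.norm_eq_abs, abs_of_nonneg hg4, hK]
      have h1 : |f (p.1 + p.2) * (a * p.1 + b * p.2)
          * (gaussianPDFReal 0 s p.1 * gaussianPDFReal 0 q p.2)|
          ≤ (|a| * |p.1| + |b| * |p.2|) * (gaussianPDFReal 0 s p.1 * gaussianPDFReal 0 q p.2) := by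
        rw [abs_mul, abs_mul, abs_of_nonneg hnn3]
        have h2 : |a * p.1 + b * p.2| ≤ |a| * |p.1| + |b| * |p.2| :=
          le_trans (abs_add_le _ _) (by simp [abs_mul])
        have := hfb (p.1 + p.2)
        have k1 := mul_le_mul_of_nonneg_right
          (mul_le_of_le_one_left (abs_nonneg (a * p.1 + b * p.2)) this) hnn3
        have k2 := mul_le_mul_of_nonneg_right h2 hnn3
        linarith
      refine le_trans h1 (le_of_eq ?_)
      ring
    have hiter :
        ∫ v, ∫ w, f (v + w) * (a * v + b * w)
            * (gaussianPDFReal 0 s v * gaussianPDFReal 0 q w) ∂volume ∂volume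
          = ∫ p : ℝ × ℝ, K p ∂(volume.prod volume) := by
      exact MeasureTheory.integral_integral (f := fun v w => f (v + w) * (a * v + b * w)
            * (gaussianPDFReal 0 s v * gaussianPDFReal 0 q w)) hKint
    rw [hiter]
    -- apply the shear change of variables
    have hHint : Integrable H (volume.prod volume) := by
      have := (shear_measurePreserving.integrable_comp_emb
        (shearEquiv.measurableEmbedding) (g := H))
      rw [show (H ∘ fun p : ℝ × ℝ => (p.1 + p.2, p.2)) = K from funext fun p => hKH p] at this
      exact this.mp hKint
    have hcv : ∫ p : ℝ × ℝ, K p ∂(volume.prod volume)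
        = ∫ p : ℝ × ℝ, H p ∂(volume.prod volume) := by
      rw [← shear_measurePreserving.integral_comp shearEquiv.measurableEmbedding H]
      exact integral_congr_ae (Filter.Eventually.of_forall fun p => (hKH p).symm)
    rw [hcv, MeasureTheory.integral_prod _ hHint]
    -- the inner integral vanishes identically
    have hτ : s * q / (s + q) ≠ 0 := by
      simp only [ne_eq, div_eq_zero_iff, mul_eq_zero, add_eq_zero]
      push_neg
      exact ⟨⟨hs, hq⟩, fun h _ => hs h⟩
    have hinner : ∀ x : ℝ, (∫ w, H (x, w) ∂volume) = 0 := by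
      intro x
      have hHxw : ∀ w : ℝ, H (x, w)
          = (f x * gaussianPDFReal 0 (s + q) x)
            * ((a * x) * gaussianPDFReal ((q : ℝ) / ((s : ℝ) + q) * x) (s * q / (s + q)) w
              + (b - a) * (w * gaussianPDFReal ((q : ℝ) / ((s : ℝ) + q) * x) (s * q / (s + q)) w)) := by
        intro w
        simp only [hH]
        rw [pdf_factor hs hq x w]
        ring
      simp_rw [hHxw]
      rw [integral_const_mul, integral_add
        ((integrable_gaussianPDFReal _ _).const_mul _)
        ((integrable_mul_pdf _ _ hτ).const_mul _),
        integral_const_mul, integral_const_mul,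
        integral_gaussianPDFReal_eq_one _ hτ, integral_mul_pdf _ _ hτ]
      have : a * x * 1 + (b - a) * ((q : ℝ) / ((s : ℝ) + q) * x) = 0 := by
        field_simp
        linear_combination x * hab
      rw [this, mul_zero]
    simp_rw [hinner]
    exact integral_zero _ _

lemma integrable_of_gauss {Ω : Type*} [MeasureSpace Ω] {Y : Ω → ℝ} (hYm : Measurable Y)
    {m : ℝ} {v : NNReal} (hY : Measure.map Y volume = gaussianReal m v) :
    Integrable Y volume := by
  have h := integrable_id_gauss m v
  rw [← hY] at h
  simpa [Function.comp] using
    (integrable_map_measure stronglyMeasurable_id.aestronglyMeasurable hYm.aemeasurable).mp h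

lemma integral_of_gauss {Ω : Type*} [MeasureSpace Ω] {Y : Ω → ℝ} (hYm : Measurable Y)
    {m : ℝ} {v : NNReal} (hY : Measure.map Y volume = gaussianReal m v) :
    ∫ ω, Y ω = m := by
  have h := integral_map (μ := volume) hYm.aemeasurable
    (f := fun x : ℝ => x) measurable_id.aestronglyMeasurable
  rw [hY, integral_id_gauss] at h
  exact h.symm

lemma condexp_core {Ω : Type*} [MeasureSpace Ω] [IsProbabilityMeasure (volume : Measure Ω)]
    (V W W' : Ω → ℝ) (s q q' : NNReal)
    (hVm : Measurable V) (hWm : Measurable W) (hW'm : Measurable W')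
    (hs : s ≠ 0)
    (hV : Measure.map V volume = gaussianReal 0 s)
    (hW : Measure.map W volume = gaussianReal 0 q)
    (hW' : Measure.map W' volume = gaussianReal 0 q')
    (hVW : IndepFun V W volume)
    (hpair : IndepFun (fun ω => (V ω, W ω)) W' volume)
    (c : ℝ) (hc : c = (s:ℝ) / ((s:ℝ) + q)) :
    (volume[fun ω => V ω + W' ω |
        MeasurableSpace.comap (fun ω => V ω + W ω) inferInstance])
      =ᵐ[volume] fun ω => c * (V ω + W ω) := by
  have hs' : (0:ℝ) < s := lt_of_le_of_ne s.coe_nonneg (fun h => hs (by exact_mod_cast h.symm))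
  have hsq : (0:ℝ) < (s:ℝ) + q := by positivity
  set X : Ω → ℝ := fun ω => V ω + W ω with hX
  have hXm : Measurable X := hVm.add hWm
  have hm : MeasurableSpace.comap X inferInstance ≤ _ := hXm.comap_le
  have intV : Integrable V volume := integrable_of_gauss hVm hV
  have intW : Integrable W volume := integrable_of_gauss hWm hW
  have intW' : Integrable W' volume := integrable_of_gauss hW'm hW'
  have hf_int : Integrable (fun ω => V ω + W' ω) volume := intV.add intW'
  have hg_int : Integrable (fun ω => c * X ω) volume := (intV.add intW).const_mul c
  symm
  refine ae_eq_condExp_of_forall_setIntegral_eq hm hf_int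
    (fun t _ _ => hg_int.integrableOn) (fun t ht _ => ?_) ?_
  swap
  · refine StronglyMeasurable.aestronglyMeasurable ?_
    have hXc : Measurable[MeasurableSpace.comap X inferInstance] X :=
      Measurable.of_comap_le le_rfl
    exact (hXc.const_mul c).stronglyMeasurable
  -- the set-integral identity
  obtain ⟨B, hB, rfl⟩ := ht
  set φ : ℝ → ℝ := Set.indicator B 1 with hφ
  have hφm : Measurable φ := measurable_one.indicator hB
  have hφb : ∀ x, |φ x| ≤ 1 := by
    intro x
    by_cases hx : x ∈ B <;> simp [hφ, hx]
  have hind_eq : ∀ (h : Ω → ℝ), ∫ ω in X ⁻¹' B, h ω ∂volume = ∫ ω, φ (X ω) * h ω ∂volume := by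
    intro h
    rw [← integral_indicator (hXm hB)]
    congr 1 with ω
    by_cases hω : X ω ∈ B <;> simp [hφ, Set.indicator_apply, hω]
  rw [hind_eq, hind_eq]
  -- integrability of the pieces
  have hφXm : Measurable (fun ω => φ (X ω)) := hφm.comp hXm
  have intφX : Integrable (fun ω => φ (X ω)) volume := by
    refine Integrable.mono' (integrable_const 1) hφXm.aestronglyMeasurable ?_
    exact Filter.Eventually.of_forall fun ω => by simpa using hφb (X ω)
  have bdd : ∀ᵐ ω ∂volume, ‖φ (X ω)‖ ≤ 1 := Filter.Eventually.of_forall fun ω => by simpa using hφb (X ω)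
  have int1 : Integrable (fun ω => φ (X ω) * ((1 - c) * V ω + (-c) * W ω)) volume :=
    Integrable.bdd_mul ((intV.const_mul (1-c)).add (intW.const_mul (-c)))
      hφXm.aestronglyMeasurable bdd
  have int2 : Integrable (fun ω => φ (X ω) * W' ω) volume :=
    Integrable.bdd_mul intW' hφXm.aestronglyMeasurable bdd
  -- the main cancellation
  have hterm1 : ∫ ω, φ (X ω) * ((1 - c) * V ω + (-c) * W ω) ∂volume = 0 := by
    have hjoint : Measure.map (fun ω => (V ω, W ω)) volume
        = (gaussianReal 0 s).prod (gaussianReal 0 q) := by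
      rw [← hV, ← hW]
      exact (indepFun_iff_map_prod_eq_prod_map_map hVm.aemeasurable hWm.aemeasurable).mp hVW
    have hmap : ∫ ω, φ (X ω) * ((1 - c) * V ω + (-c) * W ω) ∂volume
        = ∫ p : ℝ × ℝ, φ (p.1 + p.2) * ((1 - c) * p.1 + (-c) * p.2)
            ∂((gaussianReal 0 s).prod (gaussianReal 0 q)) := by
      rw [← hjoint, integral_map (hVm.aemeasurable.prodMk hWm.aemeasurable)
        (Measurable.aestronglyMeasurable (by fun_prop))]
    rw [hmap]
    refine key_vanish hs (1 - c) (-c) ?_ φ hφm hφb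
    rw [hc]; field_simp; ring
  have hterm2 : ∫ ω, φ (X ω) * W' ω ∂volume = 0 := by
    have hcomp : IndepFun (fun ω => φ (X ω)) W' volume := by
      have := hpair.comp (φ := fun p : ℝ × ℝ => φ (p.1 + p.2)) (ψ := id)
        (by fun_prop) measurable_id
      exact this
    calc ∫ ω, φ (X ω) * W' ω ∂volume
        = ∫ ω, ((fun ω => φ (X ω)) * W') ω ∂volume := rfl
      _ = (∫ ω, φ (X ω) ∂volume) * ∫ ω, W' ω ∂volume :=
          hcomp.integral_mul_eq_mul_integral intφX.aestronglyMeasurable intW'.aestronglyMeasurable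
      _ = 0 := by rw [integral_of_gauss hW'm hW']; simp
  have hsplit : ∫ ω, φ (X ω) * (V ω + W' ω) ∂volume
      = ∫ ω, φ (X ω) * ((1 - c) * V ω + (-c) * W ω) ∂volume
        + (∫ ω, φ (X ω) * W' ω ∂volume + ∫ ω, φ (X ω) * (c * X ω) ∂volume) := by
    rw [← integral_add int2 (Integrable.bdd_mul (hg_int) hφXm.aestronglyMeasurable bdd),
      ← integral_add int1 _]
    · congr 1 with ω
      rw [hX]; simp; ring
    · exact int2.add (Integrable.bdd_mul (hg_int) hφXm.aestronglyMeasurable bdd)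
  rw [hsplit, hterm1, hterm2]
  ring

lemma comap_const_mul {Ω : Type*} (X : Ω → ℝ) {c : ℝ} (hc : c ≠ 0) :
    MeasurableSpace.comap (fun ω => c * X ω) (inferInstance : MeasurableSpace ℝ)
      = MeasurableSpace.comap X inferInstance := by
  apply le_antisymm
  · have h : (fun ω => c * X ω) = (fun x : ℝ => c * x) ∘ X := rfl
    rw [h, ← MeasurableSpace.comap_comp]
    exact MeasurableSpace.comap_mono (measurable_const_mul c).comap_le
  · have h : X = (fun x : ℝ => c⁻¹ * x) ∘ (fun ω => c * X ω) := by
      funext ω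
      simp [Function.comp, ← mul_assoc, inv_mul_cancel₀ hc]
    conv_lhs => rw [h]
    rw [← MeasurableSpace.comap_comp]
    exact MeasurableSpace.comap_mono (measurable_const_mul c⁻¹).comap_le

/-- scalar collapse of the hierarchy of estimates. With
`v̂¹ = α(V + W¹)`, `v̂² = β(V + W²)`, `α = σ²/(σ²+q₁)`, `β = σ²/(σ²+q₂)`:
`E[v̂² | v̂¹] = β v̂¹` and `E[ E[v̂¹ | X²] | X¹ ] = αβ v̂¹` a.s. -/
theorem stmt18 {Ω : Type*} [MeasureSpace Ω] [IsProbabilityMeasure (volume : Measure Ω)]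
    (V W1 W2 : Ω → ℝ) (s2 q1 q2 : NNReal)
    (hVm : Measurable V) (hW1m : Measurable W1) (hW2m : Measurable W2)
    (hs2 : 0 < (s2 : ℝ)) (hq1 : 0 ≤ (q1 : ℝ)) (hq2 : 0 ≤ (q2 : ℝ))
    (hV : Measure.map V volume = gaussianReal 0 s2)
    (hW1 : Measure.map W1 volume = gaussianReal 0 q1)
    (hW2 : Measure.map W2 volume = gaussianReal 0 q2)
    (hind : iIndepFun ![V, W1, W2] volume)
    (α β : ℝ)
    (hα : α = (s2 : ℝ) / ((s2 : ℝ) + q1)) (hβ : β = (s2 : ℝ) / ((s2 : ℝ) + q2)) :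
    ((volume[fun ω => β * (V ω + W2 ω) |
        MeasurableSpace.comap (fun ω => α * (V ω + W1 ω)) inferInstance])
      =ᵐ[volume] fun ω => β * (α * (V ω + W1 ω))) ∧
    ((volume[(volume[fun ω => α * (V ω + W1 ω) |
          MeasurableSpace.comap (fun ω => V ω + W2 ω) inferInstance]) |
        MeasurableSpace.comap (fun ω => V ω + W1 ω) inferInstance])
      =ᵐ[volume] fun ω => α * β * (α * (V ω + W1 ω))) := by
  have hs2' : s2 ≠ 0 := fun h => by simp [h] at hs2
  have hαpos : 0 < α := by
    rw [hα]; exact div_pos hs2 (by linarith)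
  have hαne : α ≠ 0 := ne_of_gt hαpos
  have hmeas : ∀ i, Measurable (![V, W1, W2] i) := by
    intro i; fin_cases i <;> simpa
  have hVW1 : IndepFun V W1 volume := by
    have h := hind.indepFun (show (0 : Fin 3) ≠ 1 by decide)
    simpa using h
  have hVW2 : IndepFun V W2 volume := by
    have h := hind.indepFun (show (0 : Fin 3) ≠ 2 by decide)
    simpa using h
  have hpair12 : IndepFun (fun ω => (V ω, W1 ω)) W2 volume := by
    have h := hind.indepFun_prodMk hmeas 0 1 2 (by decide) (by decide)
    simpa using h
  have hpair21 : IndepFun (fun ω => (V ω, W2 ω)) W1 volume := by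
    have h := hind.indepFun_prodMk hmeas 0 2 1 (by decide) (by decide)
    simpa using h
  -- the two basic conditional expectation computations
  have core1 : (volume[fun ω => V ω + W2 ω |
        MeasurableSpace.comap (fun ω => V ω + W1 ω) inferInstance])
      =ᵐ[volume] fun ω => α * (V ω + W1 ω) :=
    condexp_core V W1 W2 s2 q1 q2 hVm hW1m hW2m hs2' hV hW1 hW2 hVW1 hpair12 α hα
  have core2 : (volume[fun ω => V ω + W1 ω |
        MeasurableSpace.comap (fun ω => V ω + W2 ω) inferInstance])
      =ᵐ[volume] fun ω => β * (V ω + W2 ω) :=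
    condexp_core V W2 W1 s2 q2 q1 hVm hW2m hW1m hs2' hV hW2 hW1 hVW2 hpair21 β hβ
  constructor
  · -- first statement
    rw [comap_const_mul _ hαne]
    have h1 : (volume[fun ω => β * (V ω + W2 ω) |
          MeasurableSpace.comap (fun ω => V ω + W1 ω) inferInstance])
        =ᵐ[volume] β • (volume[fun ω => V ω + W2 ω |
          MeasurableSpace.comap (fun ω => V ω + W1 ω) inferInstance]) :=
      condExp_smul β (fun ω => V ω + W2 ω) _
    refine h1.trans ?_
    filter_upwards [core1] with ω hω
    simp [hω]
  · -- second statement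
    have hinner : (volume[fun ω => α * (V ω + W1 ω) |
          MeasurableSpace.comap (fun ω => V ω + W2 ω) inferInstance])
        =ᵐ[volume] fun ω => (α * β) * (V ω + W2 ω) := by
      have h1 : (volume[fun ω => α * (V ω + W1 ω) |
            MeasurableSpace.comap (fun ω => V ω + W2 ω) inferInstance])
          =ᵐ[volume] α • (volume[fun ω => V ω + W1 ω |
            MeasurableSpace.comap (fun ω => V ω + W2 ω) inferInstance]) :=
        condExp_smul α (fun ω => V ω + W1 ω) _
      refine h1.trans ?_
      filter_upwards [core2] with ω hω
      simp [hω]; ring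
    have houter := condExp_congr_ae
      (m := MeasurableSpace.comap (fun ω => V ω + W1 ω) inferInstance) hinner
    refine houter.trans ?_
    have h2 : (volume[fun ω => (α * β) * (V ω + W2 ω) |
          MeasurableSpace.comap (fun ω => V ω + W1 ω) inferInstance])
        =ᵐ[volume] (α * β) • (volume[fun ω => V ω + W2 ω |
          MeasurableSpace.comap (fun ω => V ω + W1 ω) inferInstance]) :=
      condExp_smul (α * β) (fun ω => V ω + W2 ω) _
    refine h2.trans ?_
    filter_upwards [core1] with ω hω
    simp [hω]
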